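/- Let m ≥ 1 and B ≥ 1 be integers and c : {1,…,3m} → ℕ with 4·c_i > B and 2·c_i < B for all i and Σ_{i=1}^{3m} c_i = m·B. Consider the min-max-min selection problem in dimension n = 3m with feasible set X = { x ∈ {0,1}^{3m} : Σ_i x_i = 3 }, nominal costs ĉ_i = c_i, deviations d_i = M := m·B for all i, budget Γ = m−1 and K = m solutions. Then min over (x^1,…,x^m) ∈ X^m of max over c' ∈ U^{m−1}(ĉ,d) of min over k ∈ {1,…,m} of (c')^⊤x^k is at most B if and only if there exist pairwise disjoint sets A_1,…,A_m ⊆ {1,…,3m} with A_1 ∪ … ∪ A_m = {1,…,3m} and Σ_{i∈A_j} c_i = B for every j ∈ {1,…,m}. -/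
import Mathlib


open Finset

/-- The discrete budgeted uncertainty set
`U^Γ(ĉ,d) = { c : c i = ĉ i + δ i * d i, δ ∈ {0,1}^n, ∑ i, δ i ≤ Γ }`,
with the 0-1 vector `δ` identified with the set `D` of its nonzero coordinates. -/
noncomputable def budgetU (n : ℕ) (chat d : Fin n → ℝ) (Γ : ℕ) : Finset (Fin n → ℝ) :=
  (((Finset.univ : Finset (Fin n)).powerset.filter fun D => D.card ≤ Γ).image
    fun D i => chat i + (if i ∈ D then d i else 0))

lemma budgetU_nonempty (n : ℕ) (chat d : Fin n → ℝ) (Γ : ℕ) :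
    (budgetU n chat d Γ).Nonempty :=
  ⟨_, Finset.mem_image.mpr ⟨∅, by simp, rfl⟩⟩

/-- The feasible set of the selection problem: all `p`-element subsets of `[n]`.
It is nonempty whenever `p ≤ n`. -/
lemma selection_nonempty (n p : ℕ) (h : p ≤ n) :
    (Finset.univ.filter fun S : Finset (Fin n) => S.card = p).Nonempty := by
  obtain ⟨t, -, ht⟩ := Finset.exists_subset_card_eq
    (s := (Finset.univ : Finset (Fin n))) (n := p) (by simpa using h)
  exact ⟨t, Finset.mem_filter.mpr ⟨Finset.mem_univ _, ht⟩⟩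

lemma mem_budgetU {n : ℕ} {chat d : Fin n → ℝ} {Γ : ℕ} {c' : Fin n → ℝ} :
    c' ∈ budgetU n chat d Γ ↔ ∃ D : Finset (Fin n), D.card ≤ Γ ∧
      c' = fun i => chat i + (if i ∈ D then d i else 0) := by
  unfold budgetU
  simp only [Finset.mem_image, Finset.mem_filter, Finset.mem_powerset]
  constructor
  · rintro ⟨D, ⟨-, hc⟩, rfl⟩; exact ⟨D, hc, rfl⟩
  · rintro ⟨D, hc, rfl⟩; exact ⟨D, ⟨Finset.subset_univ _, hc⟩, rfl⟩

lemma sum_pen {n : ℕ} (c : Fin n → ℕ) (M : ℝ) (D S : Finset (Fin n)) :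
    ∑ i ∈ S, ((c i : ℝ) + if i ∈ D then M else 0)
      = (∑ i ∈ S, (c i : ℝ)) + (S ∩ D).card * M := by
  rw [Finset.sum_add_distrib, Finset.sum_ite_mem, Finset.sum_const, nsmul_eq_mul]

/-- correctness of the reduction from the 3-partition problem to the
min-max-min selection problem with `p = 3`, `ĉ = c`, `d = M = m·B`, budget
`Γ = m - 1` and `K = m` solutions. -/
theorem three_partition_reduction (m B : ℕ) (hm : 1 ≤ m) (hB : 1 ≤ B)
    (c : Fin (3 * m) → ℕ)
    (hlow : ∀ i, B < 4 * c i) (hhigh : ∀ i, 2 * c i < B)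
    (hsum : ∑ i, c i = m * B) :
    ((Fintype.piFinset fun _ : Fin m =>
        Finset.univ.filter fun S : Finset (Fin (3 * m)) => S.card = 3).inf'
        (Fintype.piFinset_nonempty.mpr fun _ =>
          selection_nonempty (3 * m) 3 (by omega))
        fun xs => (budgetU (3 * m) (fun i => (c i : ℝ))
            (fun _ => ((m : ℝ) * B)) (m - 1)).sup'
          (budgetU_nonempty _ _ _ _)
          fun c' => Finset.univ.inf' (Finset.univ_nonempty_iff.mpr ⟨⟨0, hm⟩⟩)
            fun k => ∑ i ∈ xs k, c' i) ≤ (B : ℝ) ↔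
    ∃ A : Fin m → Finset (Fin (3 * m)),
      (∀ j l, j ≠ l → Disjoint (A j) (A l)) ∧
      Finset.univ.biUnion A = Finset.univ ∧
      ∀ j, (∑ i ∈ A j, c i) = B := by
  have hc1 : ∀ i, 1 ≤ c i := fun i => by have := hlow i; omega
  -- key lower bound: sum over a 3-set hit by D exceeds B
  have hbig : ∀ (D S : Finset (Fin (3 * m))), S.card = 3 → (S ∩ D).Nonempty →
      (B : ℝ) < ∑ i ∈ S, ((c i : ℝ) + if i ∈ D then ((m : ℝ) * B) else 0) := by
    intro D S hS hne
    rw [sum_pen]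
    have h1 : (1 : ℝ) ≤ ∑ i ∈ S, (c i : ℝ) := by
      calc (1:ℝ) ≤ (S.card : ℝ) := by rw [hS]; norm_num
      _ ≤ ∑ i ∈ S, (c i : ℝ) := by
          have := Finset.card_nsmul_le_sum S (fun i => (c i : ℝ)) 1
            (fun i _ => by simpa using (Nat.one_le_cast (α := ℝ)).mpr (hc1 i))
          simpa using this
    have h2 : ((m : ℝ) * B) ≤ ((S ∩ D).card : ℝ) * ((m : ℝ) * B) := by
      have hcard : (1 : ℝ) ≤ ((S ∩ D).card : ℝ) := by
        exact_mod_cast Finset.card_pos.mpr hne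
      nlinarith [mul_pos (by exact_mod_cast hm : (0:ℝ) < (m:ℝ))
        (by exact_mod_cast hB : (0:ℝ) < (B:ℝ))]
    have h3 : (B : ℝ) ≤ (m : ℝ) * B := by
      have : (1:ℝ) ≤ (m:ℝ) := by exact_mod_cast hm
      nlinarith [(by exact_mod_cast Nat.zero_le B : (0:ℝ) ≤ (B:ℝ))]
    linarith
  constructor
  · -- forward direction
    intro h
    obtain ⟨xs, hxsmem, h⟩ := (Finset.inf'_le_iff _).mp h
    have hcard : ∀ k, (xs k).card = 3 := fun k => by
      have := Fintype.mem_piFinset.mp hxsmem k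
      simpa using this
    have hne : ∀ k, (xs k).Nonempty := fun k =>
      Finset.card_pos.mp (by rw [hcard k]; norm_num)
    set pick : Fin m → Fin (3 * m) := fun k => (hne k).choose with hpick
    have hpickmem : ∀ k, pick k ∈ xs k := fun k => (hne k).choose_spec
    -- from sup' ≤ B: for every admissible D there is k with small sum
    have hkey : ∀ D : Finset (Fin (3 * m)), D.card ≤ m - 1 →
        ∃ k : Fin m, ∑ i ∈ xs k, ((c i : ℝ) + if i ∈ D then ((m:ℝ)*B) else 0) ≤ B := by
      intro D hD
      have hmem : (fun i => (c i : ℝ) + if i ∈ D then ((m:ℝ)*B) else 0) ∈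
          budgetU (3 * m) (fun i => (c i : ℝ)) (fun _ => ((m : ℝ) * B)) (m - 1) :=
        mem_budgetU.mpr ⟨D, hD, rfl⟩
      have := Finset.sup'_le_iff (budgetU_nonempty (3*m) _ _ _)
        (fun c' => Finset.univ.inf' (Finset.univ_nonempty_iff.mpr ⟨⟨0, hm⟩⟩)
            fun k => ∑ i ∈ xs k, c' i) |>.mp h _ hmem
      obtain ⟨k, -, hk⟩ := (Finset.inf'_le_iff _).mp this
      exact ⟨k, hk⟩
    -- pairwise disjointness
    have hdisj : ∀ j l, j ≠ l → Disjoint (xs j) (xs l) := by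
      intro j l hjl
      by_contra hnd
      obtain ⟨e, hej, hel⟩ := Finset.not_disjoint_iff.mp hnd
      set q : Fin m → Fin (3 * m) := fun k => if k = j ∨ k = l then e else pick k with hq
      set D : Finset (Fin (3 * m)) := Finset.image q (Finset.univ.erase l) with hD
      have hDcard : D.card ≤ m - 1 := by
        calc D.card ≤ (Finset.univ.erase l).card := Finset.card_image_le
        _ = m - 1 := by rw [Finset.card_erase_of_mem (Finset.mem_univ l)]; simp
      have hqD : ∀ k, q k ∈ D := by
        intro k
        by_cases hk : k = l
        · subst hk
          refine Finset.mem_image.mpr ⟨j, Finset.mem_erase.mpr ⟨hjl, Finset.mem_univ j⟩, ?_⟩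
          simp [hq]
        · exact Finset.mem_image.mpr ⟨k, Finset.mem_erase.mpr ⟨hk, Finset.mem_univ k⟩, rfl⟩
      have hqx : ∀ k, q k ∈ xs k := by
        intro k
        rcases eq_or_ne k j with rfl | hkj
        · simpa [hq] using hej
        rcases eq_or_ne k l with rfl | hkl
        · simpa [hq] using hel
        · simpa [hq, hkj, hkl] using hpickmem k
      obtain ⟨k, hk⟩ := hkey D hDcard
      exact absurd hk (not_le.mpr (hbig D (xs k) (hcard k)
        ⟨q k, Finset.mem_inter.mpr ⟨hqx k, hqD k⟩⟩))
    -- each sum at most B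
    have hle : ∀ k, (∑ i ∈ xs k, c i) ≤ B := by
      intro k
      set D : Finset (Fin (3 * m)) := Finset.image pick (Finset.univ.erase k) with hD
      have hDcard : D.card ≤ m - 1 := by
        calc D.card ≤ (Finset.univ.erase k).card := Finset.card_image_le
        _ = m - 1 := by rw [Finset.card_erase_of_mem (Finset.mem_univ k)]; simp
      obtain ⟨k', hk'⟩ := hkey D hDcard
      have hkk : k' = k := by
        by_contra hne'
        have hmem' : pick k' ∈ xs k' ∩ D :=
          Finset.mem_inter.mpr ⟨hpickmem k',
            Finset.mem_image.mpr ⟨k', Finset.mem_erase.mpr ⟨hne', Finset.mem_univ k'⟩, rfl⟩⟩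
        exact absurd hk' (not_le.mpr (hbig D (xs k') (hcard k') ⟨pick k', hmem'⟩))
      subst hkk
      have : (∑ i ∈ xs k', (c i : ℝ)) ≤ B := by
        refine le_trans ?_ hk'
        apply Finset.sum_le_sum
        intro i _
        have : (0:ℝ) ≤ if i ∈ D then ((m:ℝ)*B) else 0 := by
          split
          · positivity
          · exact le_rfl
        linarith
      have hR : ((∑ i ∈ xs k', c i : ℕ) : ℝ) ≤ B := by push_cast; exact this
      exact_mod_cast hR
    -- union is everything
    have hcover : Finset.univ.biUnion xs = Finset.univ := by
      apply Finset.eq_univ_of_card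
      rw [Finset.card_biUnion (fun j _ l _ hjl => hdisj j l hjl)]
      simp [hcard, Finset.card_univ]
      ring
    have hsumall : ∑ k, ∑ i ∈ xs k, c i = m * B := by
      rw [← Finset.sum_biUnion (fun j _ l _ hjl => hdisj j l hjl), hcover, hsum]
    have heq : ∀ k, (∑ i ∈ xs k, c i) = B := by
      by_contra hcon
      push_neg at hcon
      obtain ⟨k0, hk0⟩ := hcon
      have hlt : (∑ i ∈ xs k0, c i) < B := lt_of_le_of_ne (hle k0) hk0
      have : ∑ k, ∑ i ∈ xs k, c i < ∑ _k : Fin m, B :=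
        Finset.sum_lt_sum (fun k _ => hle k) ⟨k0, Finset.mem_univ k0, hlt⟩
      simp [hsumall, Finset.card_univ, mul_comm] at this
    exact ⟨xs, hdisj, hcover, heq⟩
  · -- reverse direction
    rintro ⟨A, hdisj, hcover, hsumA⟩
    -- each A j has card 3
    have hA3 : ∀ j, (A j).card = 3 := by
      intro j
      have h2 : 2 * B ≤ (A j).card * (B - 1) := by
        have : ∑ i ∈ A j, 2 * c i = 2 * B := by rw [← Finset.mul_sum, hsumA]
        calc 2 * B = ∑ i ∈ A j, 2 * c i := this.symm
        _ ≤ (A j).card * (B - 1) := by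
            have := Finset.sum_le_card_nsmul (A j) (fun i => 2 * c i) (B - 1)
              (fun i _ => by have := hhigh i; show 2 * c i ≤ B - 1; omega)
            simpa [smul_eq_mul] using this
      have h4 : (A j).card * (B + 1) ≤ 4 * B := by
        have : ∑ i ∈ A j, 4 * c i = 4 * B := by rw [← Finset.mul_sum, hsumA]
        calc (A j).card * (B + 1) ≤ ∑ i ∈ A j, 4 * c i := by
              have := Finset.card_nsmul_le_sum (A j) (fun i => 4 * c i) (B + 1)
                (fun i _ => by have := hlow i; show B + 1 ≤ 4 * c i; omega)
              simpa [smul_eq_mul] using this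
        _ = 4 * B := this
      set t := (A j).card
      rcases lt_trichotomy t 3 with ht | ht | ht
      · exfalso
        have : t * (B - 1) ≤ 2 * (B - 1) := Nat.mul_le_mul_right _ (by omega)
        omega
      · exact ht
      · exfalso
        have : 4 * (B + 1) ≤ t * (B + 1) := Nat.mul_le_mul_right _ (by omega)
        omega
    have hAmem : A ∈ Fintype.piFinset fun _ : Fin m =>
        Finset.univ.filter fun S : Finset (Fin (3 * m)) => S.card = 3 :=
      Fintype.mem_piFinset.mpr fun j => Finset.mem_filter.mpr ⟨Finset.mem_univ _, hA3 j⟩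
    refine le_trans (Finset.inf'_le _ hAmem) ?_
    rw [Finset.sup'_le_iff]
    intro c' hc'
    obtain ⟨D, hDcard, rfl⟩ := mem_budgetU.mp hc'
    -- find a part disjoint from D
    have hex : ∃ k, Disjoint (A k) D := by
      by_contra hcon
      push_neg at hcon
      have hg : ∀ k : Fin m, ∃ e, e ∈ A k ∧ e ∈ D := fun k =>
        Finset.not_disjoint_iff.mp (hcon k)
      choose g hg1 hg2 using hg
      have hinj : Set.InjOn g (Finset.univ : Finset (Fin m)) := by
        intro a _ b _ hab
        by_contra hne'
        exact (Finset.disjoint_left.mp (hdisj a b hne') (hg1 a)) (hab ▸ hg1 b)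
      have : m ≤ D.card := by
        calc m = (Finset.univ : Finset (Fin m)).card := by simp
        _ = (Finset.image g Finset.univ).card := (Finset.card_image_of_injOn hinj).symm
        _ ≤ D.card := Finset.card_le_card (fun x hx => by
            obtain ⟨a, -, rfl⟩ := Finset.mem_image.mp hx; exact hg2 a)
      omega
    obtain ⟨k, hk⟩ := hex
    refine le_trans (Finset.inf'_le _ (Finset.mem_univ k)) ?_
    have : ∑ i ∈ A k, ((c i : ℝ) + if i ∈ D then ((m:ℝ)*B) else 0)
        = ∑ i ∈ A k, (c i : ℝ) := by
      rw [sum_pen]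
      have : (A k ∩ D) = ∅ := Finset.disjoint_iff_inter_eq_empty.mp hk
      simp [this]
    rw [this]
    have hRk : (∑ i ∈ A k, (c i : ℝ)) = (B : ℝ) := by exact_mod_cast hsumA k
    exact le_of_eq hRk
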